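/- Let H be a complex Hilbert space and P : D(P) → H a symmetric linear operator. Let (u_m), (v_m) be sequences in D(P) with ‖u_m‖ = ‖v_m‖ = 1, and (λ_m), (μ_m) sequences of complex numbers such that ‖P u_m - λ_m u_m‖ = O(m^{-∞}) and ‖P v_m - μ_m v_m‖ = O(m^{-∞}). Suppose there exists z₀ ∈ ℂ, z₀ ≠ 0, with ⟨u_m, v_m⟩ = z₀ + O(m⁻¹). Then λ_m - conj(μ_m) = O(m^{-∞}), i.e. for every N there exists c_N with |λ_m - conj(μ_m)| ≤ c_N m^{-N} for all m ≥ 1. -/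
import Mathlib


open scoped InnerProductSpace ComplexConjugate

/-- Abstract uniqueness lemma for quasi-resonances of a symmetric operator:
if two quasi-pairs have overlaps bounded away from zero, the quasi-resonances
agree up to conjugation modulo O(m^{-∞}). -/
theorem stmt_5 (H : Type*) [NormedAddCommGroup H] [InnerProductSpace ℂ H]
    (D : Submodule ℂ H) (P : D →ₗ[ℂ] H)
    (hsym : ∀ x y : D, ⟪P x, (y : H)⟫_ℂ = ⟪(x : H), P y⟫_ℂ)
    (u v : ℕ → D) (hu : ∀ m, ‖(u m : H)‖ = 1) (hv : ∀ m, ‖(v m : H)‖ = 1)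
    (lam mu : ℕ → ℂ)
    (hlu : ∀ N : ℕ, ∃ C > 0, ∀ m : ℕ, 1 ≤ m →
      ‖P (u m) - lam m • (u m : H)‖ ≤ C / (m : ℝ) ^ N)
    (hmv : ∀ N : ℕ, ∃ C > 0, ∀ m : ℕ, 1 ≤ m →
      ‖P (v m) - mu m • (v m : H)‖ ≤ C / (m : ℝ) ^ N)
    (z0 : ℂ) (hz0 : z0 ≠ 0)
    (hover : ∃ C > 0, ∀ m : ℕ, 1 ≤ m →
      ‖⟪(u m : H), (v m : H)⟫_ℂ - z0‖ ≤ C / (m : ℝ)) :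
    ∀ N : ℕ, ∃ c > 0, ∀ m : ℕ, 1 ≤ m →
      ‖lam m - conj (mu m)‖ ≤ c / (m : ℝ) ^ N := by
  have key : ∀ m : ℕ, ‖lam m - conj (mu m)‖ * ‖⟪(u m : H), (v m : H)⟫_ℂ‖ ≤
      ‖P (v m) - mu m • (v m : H)‖ + ‖P (u m) - lam m • (u m : H)‖ := by
    intro m
    have h1 : (conj (lam m) - mu m) * ⟪(u m : H), (v m : H)⟫_ℂ
        = ⟪(u m : H), P (v m) - mu m • (v m : H)⟫_ℂ
          - ⟪(P (u m) - lam m • (u m : H) : H), (v m : H)⟫_ℂ := by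
      rw [inner_sub_right, inner_sub_left, inner_smul_right, inner_smul_left, hsym]
      ring
    have h2 : ‖lam m - conj (mu m)‖ = ‖conj (lam m) - mu m‖ := by
      rw [← RCLike.norm_conj (conj (lam m) - mu m), map_sub]
      simp
    calc ‖lam m - conj (mu m)‖ * ‖⟪(u m : H), (v m : H)⟫_ℂ‖
        = ‖(conj (lam m) - mu m) * ⟪(u m : H), (v m : H)⟫_ℂ‖ := by
          rw [norm_mul, h2]
      _ = ‖⟪(u m : H), P (v m) - mu m • (v m : H)⟫_ℂ
            - ⟪(P (u m) - lam m • (u m : H) : H), (v m : H)⟫_ℂ‖ := by rw [h1]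
      _ ≤ ‖⟪(u m : H), P (v m) - mu m • (v m : H)⟫_ℂ‖
            + ‖⟪(P (u m) - lam m • (u m : H) : H), (v m : H)⟫_ℂ‖ := norm_sub_le _ _
      _ ≤ ‖(u m : H)‖ * ‖P (v m) - mu m • (v m : H)‖
            + ‖P (u m) - lam m • (u m : H)‖ * ‖(v m : H)‖ := by
          gcongr <;> exact norm_inner_le_norm _ _
      _ = _ := by rw [hu, hv]; ring
  intro N
  obtain ⟨C1, hC1, hC1'⟩ := hlu N
  obtain ⟨C2, hC2, hC2'⟩ := hmv N
  obtain ⟨C3, hC3, hC3'⟩ := hover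
  set z := ‖z0‖ with hzdef
  have hzp : 0 < z := norm_pos_iff.mpr hz0
  set M : ℕ := ⌈2 * C3 / z⌉₊ + 1 with hMdef
  set c0 : ℝ := ∑ m ∈ Finset.Icc 1 M, ‖lam m - conj (mu m)‖ * (m : ℝ) ^ N with hc0def
  have hc0 : 0 ≤ c0 := Finset.sum_nonneg (fun i _ => by positivity)
  have hval : (0:ℝ) ≤ 2 * (C1 + C2) / z :=
    div_nonneg (by linarith) (le_of_lt hzp)
  refine ⟨c0 + 2 * (C1 + C2) / z + 1, by linarith, ?_⟩
  intro m hm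
  have hmpos : (0:ℝ) < (m:ℝ) ^ N := by positivity
  rw [le_div_iff₀ hmpos]
  by_cases hcase : m ≤ M
  · have hle : ‖lam m - conj (mu m)‖ * (m : ℝ) ^ N ≤ c0 := by
      rw [hc0def]
      exact Finset.single_le_sum (f := fun i => ‖lam i - conj (mu i)‖ * (i : ℝ) ^ N)
        (fun i _ => by positivity) (Finset.mem_Icc.mpr ⟨hm, hcase⟩)
    linarith
  · push_neg at hcase
    have hmM : (M : ℝ) < (m : ℝ) := by exact_mod_cast hcase
    have hceil : 2 * C3 / z ≤ (M : ℝ) := by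
      have := Nat.le_ceil (2 * C3 / z)
      push_cast [hMdef]
      push_cast at this
      linarith
    have hmz : 2 * C3 / z < (m : ℝ) := lt_of_le_of_lt hceil hmM
    have hm1 : (0:ℝ) < (m : ℝ) := by exact_mod_cast hm
    have hC3m : C3 / (m : ℝ) < z / 2 := by
      rw [div_lt_div_iff₀ hm1 (by norm_num : (0:ℝ) < 2)]
      rw [div_lt_iff₀ hzp] at hmz
      nlinarith
    have hinner : z / 2 ≤ ‖⟪(u m : H), (v m : H)⟫_ℂ‖ := by
      have h1 := hC3' m hm
      have h2 := abs_norm_sub_norm_le (⟪(u m : H), (v m : H)⟫_ℂ) z0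
      rw [abs_le] at h2
      linarith [h2.1]
    have hA : (0:ℝ) ≤ ‖lam m - conj (mu m)‖ := norm_nonneg _
    have hkey := key m
    have hrem : ‖P (v m) - mu m • (v m : H)‖ + ‖P (u m) - lam m • (u m : H)‖
        ≤ (C1 + C2) / (m : ℝ) ^ N := by
      have := hC1' m hm
      have := hC2' m hm
      rw [add_div]
      linarith
    have hmain : ‖lam m - conj (mu m)‖ * (z / 2) ≤ (C1 + C2) / (m : ℝ) ^ N := by
      calc ‖lam m - conj (mu m)‖ * (z / 2)
          ≤ ‖lam m - conj (mu m)‖ * ‖⟪(u m : H), (v m : H)⟫_ℂ‖ := by gcongr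
        _ ≤ _ := le_trans hkey hrem
    have hfin : ‖lam m - conj (mu m)‖ * (m : ℝ) ^ N ≤ 2 * (C1 + C2) / z := by
      rw [le_div_iff₀ hzp]
      have h3 : (C1 + C2) / (m : ℝ) ^ N * (m : ℝ) ^ N = C1 + C2 :=
        div_mul_cancel₀ _ (ne_of_gt hmpos)
      nlinarith
    linarith
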